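/- Let m, n ≥ 2 and let G be the ordered graph on vertices v_1, ..., v_{m+n} whose only edges are v_1 v_{m+n} and v_m v_{m+1}. Color the edges of the complete graph on the linearly ordered vertex set {1, ..., 2m+2n-3} by making an edge red if it has an endpoint among the first m-1 vertices or among the last n-1 vertices, and blue otherwise. Then this coloring contains no monochromatic ordered copy of G; consequently R(G) > 2m + 2n - 3. -/

import Mathlib

/-- A `t`-edge-coloring `c` of the complete graph on the ordered vertex set `Fin N`
contains a monochromatic ordered copy of the ordered graph `G` on `Fin M`. -/
def HasMonoCopy {M N t : ℕ} (G : SimpleGraph (Fin M)) (c : Fin N → Fin N → Fin t) : Prop :=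
  ∃ k : Fin t, ∃ f : Fin M → Fin N, StrictMono f ∧
    ∀ u v : Fin M, u < v → G.Adj u v → c (f u) (f v) = k

/-- The `t`-color ordered Ramsey number of the ordered graph `G`: the least `N` such that
every `t`-coloring of the edges of the complete graph on `Fin N` contains a monochromatic
ordered copy of `G`. -/
noncomputable def orderedRamsey {M : ℕ} (t : ℕ) (G : SimpleGraph (Fin M)) : ℕ :=
  sInf {N : ℕ | ∀ c : Fin N → Fin N → Fin t, HasMonoCopy G c}

/-- An interval coloring of an ordered graph with `k` parts, encoded as a monotone
surjection onto `Fin k` whose fibers (the parts, which are intervals of consecutive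
vertices) are independent sets. -/
def IsIntervalColoring {N k : ℕ} (G : SimpleGraph (Fin N)) (p : Fin N → Fin k) : Prop :=
  Monotone p ∧ Function.Surjective p ∧ ∀ u v : Fin N, G.Adj u v → p u ≠ p v

/-- The interval chromatic number of an ordered graph. -/
noncomputable def intervalChromatic {N : ℕ} (G : SimpleGraph (Fin N)) : ℕ :=
  sInf {k : ℕ | ∃ p : Fin N → Fin k, IsIntervalColoring G p}

/- ---------- auxiliary lemmas ---------- -/

lemma smono_le {M N : ℕ} {f : Fin M → Fin N} (hf : StrictMono f) :
    ∀ (d : ℕ) (u v : Fin M), (v : ℕ) = (u : ℕ) + d → (f u : ℕ) + d ≤ (f v : ℕ) := by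
  intro d
  induction d with
  | zero =>
    intro u v h
    have : u = v := Fin.ext (by omega)
    simp [this]
  | succ d ih =>
    intro u v h
    have hv : (u : ℕ) + d < M := by have := v.isLt; omega
    have h1 := ih u ⟨(u : ℕ) + d, hv⟩ rfl
    have h2 : f ⟨(u : ℕ) + d, hv⟩ < f v := hf (by rw [Fin.lt_def]; simp; omega)
    rw [Fin.lt_def] at h2
    omega

lemma fin2_eq (x y k : Fin 2) (hx : x ≠ k) (hy : y ≠ k) : x = y := by
  fin_cases x <;> fin_cases y <;> fin_cases k <;> simp_all

lemma adj_cases {m n : ℕ} (hm : 2 ≤ m) (hn : 2 ≤ n)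
    (G : SimpleGraph (Fin (m + n)))
    (hG : G = SimpleGraph.fromEdgeSet
      {s((⟨0, by have := hm; omega⟩ : Fin (m + n)), (⟨m + n - 1, by have := hm; omega⟩ : Fin (m + n))),
       s((⟨m - 1, by have := hm; omega⟩ : Fin (m + n)), (⟨m, by have := hm; omega⟩ : Fin (m + n)))})
    (x y : Fin (m + n)) (hxy : x < y) (h : G.Adj x y) :
    ((x : ℕ) = 0 ∧ (y : ℕ) = m + n - 1) ∨ ((x : ℕ) = m - 1 ∧ (y : ℕ) = m) := by
  subst hG
  rw [SimpleGraph.fromEdgeSet_adj] at h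
  obtain ⟨hmem, -⟩ := h
  simp only [Set.mem_insert_iff, Set.mem_singleton_iff, Sym2.eq_iff, Fin.ext_iff] at hmem
  rw [Fin.lt_def] at hxy
  omega

lemma adj_edge1 {m n : ℕ} (hm : 2 ≤ m) (hn : 2 ≤ n)
    (G : SimpleGraph (Fin (m + n)))
    (hG : G = SimpleGraph.fromEdgeSet
      {s((⟨0, by have := hm; omega⟩ : Fin (m + n)), (⟨m + n - 1, by have := hm; omega⟩ : Fin (m + n))),
       s((⟨m - 1, by have := hm; omega⟩ : Fin (m + n)), (⟨m, by have := hm; omega⟩ : Fin (m + n)))}) :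
    G.Adj ⟨0, by have := hm; omega⟩ ⟨m + n - 1, by have := hm; omega⟩ := by
  subst hG
  refine (SimpleGraph.fromEdgeSet_adj _).mpr ⟨Set.mem_insert _ _, ?_⟩
  simp [Fin.ext_iff]; omega

lemma adj_edge2 {m n : ℕ} (hm : 2 ≤ m) (hn : 2 ≤ n)
    (G : SimpleGraph (Fin (m + n)))
    (hG : G = SimpleGraph.fromEdgeSet
      {s((⟨0, by have := hm; omega⟩ : Fin (m + n)), (⟨m + n - 1, by have := hm; omega⟩ : Fin (m + n))),
       s((⟨m - 1, by have := hm; omega⟩ : Fin (m + n)), (⟨m, by have := hm; omega⟩ : Fin (m + n)))}) :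
    G.Adj ⟨m - 1, by have := hm; omega⟩ ⟨m, by have := hm; omega⟩ := by
  subst hG
  refine (SimpleGraph.fromEdgeSet_adj _).mpr ⟨?_, ?_⟩
  · right; rfl
  · simp [Fin.ext_iff]; omega

/-- The given coloring has no monochromatic ordered copy of `G`. -/
lemma no_copy {m n : ℕ} (hm : 2 ≤ m) (hn : 2 ≤ n)
    (G : SimpleGraph (Fin (m + n)))
    (hG : G = SimpleGraph.fromEdgeSet
      {s((⟨0, by have := hm; omega⟩ : Fin (m + n)), (⟨m + n - 1, by have := hm; omega⟩ : Fin (m + n))),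
       s((⟨m - 1, by have := hm; omega⟩ : Fin (m + n)), (⟨m, by have := hm; omega⟩ : Fin (m + n)))})
    (c : Fin (2 * m + 2 * n - 3) → Fin (2 * m + 2 * n - 3) → Fin 2)
    (hc : ∀ i j : Fin (2 * m + 2 * n - 3),
      c i j = if (i : ℕ) < m - 1 ∨ (j : ℕ) < m - 1 ∨
        2 * m + n - 2 ≤ (i : ℕ) ∨ 2 * m + n - 2 ≤ (j : ℕ) then 0 else 1) :
    ¬ HasMonoCopy G c := by
  rintro ⟨k, f, hf, hcol⟩
  have e1 := hcol ⟨0, by have := hm; omega⟩ ⟨m + n - 1, by have := hm; omega⟩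
    (by rw [Fin.lt_def]; simp; omega) (adj_edge1 hm hn G hG)
  have e2 := hcol ⟨m - 1, by have := hm; omega⟩ ⟨m, by have := hm; omega⟩
    (by rw [Fin.lt_def]; simp; omega) (adj_edge2 hm hn G hG)
  rw [hc] at e1 e2
  have h1 := smono_le hf (m - 1) ⟨0, by have := hm; omega⟩ ⟨m - 1, by have := hm; omega⟩ (by simp)
  have h2 := smono_le hf 1 ⟨m - 1, by have := hm; omega⟩ ⟨m, by have := hm; omega⟩ (by simp; omega)
  have h3 := smono_le hf (n - 1) ⟨m, by have := hm; omega⟩ ⟨m + n - 1, by have := hm; omega⟩ (by simp; omega)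
  have h4 := (f ⟨m + n - 1, by have := hm; omega⟩).isLt
  obtain ⟨kv, hk⟩ := k
  interval_cases kv
  · -- red copy impossible: the middle edge is blue
    split_ifs at e2 with hP
    · omega
    · simp [Fin.ext_iff] at e2
  · -- blue copy impossible: the long edge is red
    split_ifs at e1 with hQ
    · simp [Fin.ext_iff] at e1
    · push_neg at hQ; omega

/-- piecewise embedding used in the positive case of the upper bound -/
def gfun (m n N u v i : ℕ) : ℕ :=
  if i < m - 1 then i
  else if i = m - 1 then u
  else if i = m then v
  else if i = m + n - 1 then N - 1
  else v + (i - m)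

lemma gfun_lt {m n N u v : ℕ} (hm : 2 ≤ m) (hn : 2 ≤ n) (hN : N = 2 * m + 2 * n - 2)
    (hu : m - 1 ≤ u) (huv : u < v) (hv : v ≤ N - n) {i : ℕ} (hi : i < m + n) :
    gfun m n N u v i < N := by
  unfold gfun; split_ifs <;> omega

lemma gfun_mono {m n N u v : ℕ} (hm : 2 ≤ m) (hn : 2 ≤ n) (hN : N = 2 * m + 2 * n - 2)
    (hu : m - 1 ≤ u) (huv : u < v) (hv : v ≤ N - n) {a b : ℕ}
    (hab : a < b) (hb : b < m + n) :
    gfun m n N u v a < gfun m n N u v b := by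
  unfold gfun; split_ifs <;> omega

lemma gfun_zero {m n N u v : ℕ} (hm : 2 ≤ m) : gfun m n N u v 0 = 0 := by
  unfold gfun; split_ifs <;> omega

lemma gfun_last {m n N u v : ℕ} (hm : 2 ≤ m) (hn : 2 ≤ n) :
    gfun m n N u v (m + n - 1) = N - 1 := by
  unfold gfun; split_ifs <;> omega

lemma gfun_m1 {m n N u v : ℕ} (hm : 2 ≤ m) : gfun m n N u v (m - 1) = u := by
  unfold gfun; split_ifs <;> omega

lemma gfun_m {m n N u v : ℕ} (hm : 2 ≤ m) : gfun m n N u v m = v := by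
  unfold gfun; split_ifs <;> omega

/-- Every 2-coloring of the complete graph on `2m+2n-2` vertices contains a
monochromatic ordered copy of `G`. -/
lemma upper {m n : ℕ} (hm : 2 ≤ m) (hn : 2 ≤ n)
    (G : SimpleGraph (Fin (m + n)))
    (hG : G = SimpleGraph.fromEdgeSet
      {s((⟨0, by have := hm; omega⟩ : Fin (m + n)), (⟨m + n - 1, by have := hm; omega⟩ : Fin (m + n))),
       s((⟨m - 1, by have := hm; omega⟩ : Fin (m + n)), (⟨m, by have := hm; omega⟩ : Fin (m + n)))}) :
    ∀ c : Fin (2 * m + 2 * n - 2) → Fin (2 * m + 2 * n - 2) → Fin 2, HasMonoCopy G c := by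
  intro c
  set k := c ⟨0, by have := hm; omega⟩ ⟨2 * m + 2 * n - 2 - 1, by have := hm; omega⟩ with hk
  by_cases h : ∃ u v : Fin (2 * m + 2 * n - 2), m - 1 ≤ (u : ℕ) ∧ (u : ℕ) < (v : ℕ) ∧
      (v : ℕ) ≤ 2 * m + 2 * n - 2 - n ∧ c u v = k
  · obtain ⟨u, v, hu, huv, hv, hcuv⟩ := h
    let f : Fin (m + n) → Fin (2 * m + 2 * n - 2) := fun i =>
      ⟨gfun m n (2 * m + 2 * n - 2) u v i, gfun_lt hm hn rfl hu huv hv i.isLt⟩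
    have hfval : ∀ i, (f i : ℕ) = gfun m n (2 * m + 2 * n - 2) u v i := fun i => rfl
    refine ⟨k, f, ?_, ?_⟩
    · intro a b hab
      rw [Fin.lt_def] at hab ⊢
      rw [hfval, hfval]
      exact gfun_mono hm hn rfl hu huv hv hab b.isLt
    · intro x y hxy hadj
      rcases adj_cases hm hn G hG x y hxy hadj with ⟨hx, hy⟩ | ⟨hx, hy⟩
      · have e1 : f x = ⟨0, by have := hm; omega⟩ := Fin.ext (by
          conv_lhs => rw [hfval, hx]
          exact gfun_zero hm)
        have e2 : f y = ⟨2 * m + 2 * n - 2 - 1, by have := hm; omega⟩ := Fin.ext (by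
          conv_lhs => rw [hfval, hy]
          exact gfun_last hm hn)
        rw [e1, e2]
      · have e1 : f x = u := Fin.ext (by
          conv_lhs => rw [hfval, hx]
          exact gfun_m1 hm)
        have e2 : f y = v := Fin.ext (by
          conv_lhs => rw [hfval, hy]
          exact gfun_m hm)
        rw [e1, e2]
        exact hcuv
  · push_neg at h
    let f : Fin (m + n) → Fin (2 * m + 2 * n - 2) := fun i =>
      ⟨m - 1 + (i : ℕ), by have := i.isLt; omega⟩
    have hfval : ∀ i, (f i : ℕ) = m - 1 + (i : ℕ) := fun i => rfl
    have hreg : ∀ x y : Fin (m + n), (x : ℕ) < (y : ℕ) → c (f x) (f y) ≠ k := by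
      intro x y hxy
      apply h
      · rw [hfval]; omega
      · rw [hfval, hfval]; omega
      · rw [hfval]; have := y.isLt; omega
    refine ⟨c (f ⟨0, by have := hm; omega⟩) (f ⟨m + n - 1, by have := hm; omega⟩), f, ?_, ?_⟩
    · intro a b hab
      rw [Fin.lt_def] at hab ⊢
      rw [hfval, hfval]
      omega
    · intro x y hxy hadj
      rcases adj_cases hm hn G hG x y hxy hadj with ⟨hx, hy⟩ | ⟨hx, hy⟩
      · have e1 : x = ⟨0, by have := hm; omega⟩ := Fin.ext hx
        have e2 : y = ⟨m + n - 1, by have := hm; omega⟩ := Fin.ext hy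
        rw [e1, e2]
      · exact fin2_eq _ _ k (hreg x y (by omega))
          (hreg ⟨0, by have := hm; omega⟩ ⟨m + n - 1, by have := hm; omega⟩ (by simp; omega))

/-- If `G` is the ordered graph on `v_1,…,v_{m+n}` whose only edges are `v_1 v_{m+n}`
and `v_m v_{m+1}`, then the coloring of the complete graph on `{1,…,2m+2n-3}` that
colors an edge red (`0`) iff it has an endpoint among the first `m-1` or the last
`n-1` vertices, and blue (`1`) otherwise, has no monochromatic ordered copy of `G`;
consequently `R(G) > 2m + 2n - 3`. -/
theorem stmt5 {m n : ℕ} (hm : 2 ≤ m) (hn : 2 ≤ n)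
    (G : SimpleGraph (Fin (m + n)))
    (hG : G = SimpleGraph.fromEdgeSet
      {s((⟨0, by omega⟩ : Fin (m + n)), (⟨m + n - 1, by omega⟩ : Fin (m + n))),
       s((⟨m - 1, by omega⟩ : Fin (m + n)), (⟨m, by omega⟩ : Fin (m + n)))})
    (c : Fin (2 * m + 2 * n - 3) → Fin (2 * m + 2 * n - 3) → Fin 2)
    (hc : ∀ i j : Fin (2 * m + 2 * n - 3),
      c i j = if (i : ℕ) < m - 1 ∨ (j : ℕ) < m - 1 ∨
        2 * m + n - 2 ≤ (i : ℕ) ∨ 2 * m + n - 2 ≤ (j : ℕ) then 0 else 1) :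
    ¬ HasMonoCopy G c ∧ 2 * m + 2 * n - 3 < orderedRamsey 2 G := by
  have part1 : ¬ HasMonoCopy G c := no_copy hm hn G hG c hc
  refine ⟨part1, ?_⟩
  by_contra hcon
  push_neg at hcon
  rw [orderedRamsey] at hcon
  have hne : {N : ℕ | ∀ c' : Fin N → Fin N → Fin 2, HasMonoCopy G c'}.Nonempty :=
    ⟨2 * m + 2 * n - 2, upper hm hn G hG⟩
  have hmem := Nat.sInf_mem hne
  set N₀ := sInf {N : ℕ | ∀ c' : Fin N → Fin N → Fin 2, HasMonoCopy G c'} with hN₀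
  have hle : N₀ ≤ 2 * m + 2 * n - 3 := hcon
  have hmem' : ∀ c' : Fin N₀ → Fin N₀ → Fin 2, HasMonoCopy G c' := hmem
  obtain ⟨k, f, hf, hcol⟩ := hmem' (fun i j =>
    c ⟨i, lt_of_lt_of_le i.isLt hle⟩ ⟨j, lt_of_lt_of_le j.isLt hle⟩)
  apply part1
  refine ⟨k, fun i => ⟨(f i : ℕ), lt_of_lt_of_le (f i).isLt hle⟩, ?_, ?_⟩
  · intro a b hab
    rw [Fin.lt_def]
    exact hf hab
  · intro x y hxy hadj
    exact hcol x y hxy hadj
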